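/- Let A be a nonempty finite set, f: Δ(A) → ℝ^A continuous, and x* ∈ Δ(A) such that x*(a') = 0 whenever f_{a''}(x*) > f_{a'}(x*) for some a''. Let (x_ℓ) be any sequence of totally mixed points of Δ(A) converging to x*, and suppose the set A⁺ = {a : max_{ã} f_{ã}(x*) − f_a(x*) > 0} is nonempty. Set γ0 = (1/2)·min_{a∈A⁺}(max_{ã} f_{ã}(x*) − f_a(x*)) and ε_ℓ = max_{a : x*(a)=0} x_ℓ(a). Then γ0 > 0, ε_ℓ → 0, and there exists L such that for all ℓ ≥ L and all a', a'' ∈ A: f_{a''}(x_ℓ) − f_{a'}(x_ℓ) > γ0 implies x_ℓ(a') ≤ ε_ℓ. -/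

import Mathlib

/-- Every support-in-argmax point is the limit of ε-perfect γ0-points along any
    totally mixed approximating sequence. -/
theorem stmt12 {A : Type*} [Fintype A] [Nonempty A]
    (f : (A → ℝ) → A → ℝ)
    (hf : ContinuousOn f {x : A → ℝ | (∀ a, 0 ≤ x a) ∧ ∑ a, x a = 1})
    (xs : A → ℝ) (hxs : (∀ a, 0 ≤ xs a) ∧ ∑ a, xs a = 1)
    (hsupp : ∀ a' a'', f xs a' < f xs a'' → xs a' = 0)
    (x : ℕ → A → ℝ)
    (hxmem : ∀ ℓ, (∀ a, 0 < x ℓ a) ∧ ∑ a, x ℓ a = 1)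
    (hconv : Filter.Tendsto x Filter.atTop (nhds xs))
    (hAplus : (Finset.univ.filter fun a =>
        0 < Finset.univ.sup' Finset.univ_nonempty (f xs) - f xs a).Nonempty) :
    0 < (1 / 2) * ((Finset.univ.filter fun a =>
        0 < Finset.univ.sup' Finset.univ_nonempty (f xs) - f xs a).inf' hAplus
        fun a => Finset.univ.sup' Finset.univ_nonempty (f xs) - f xs a) ∧
    Filter.Tendsto (fun ℓ => Finset.univ.sup' Finset.univ_nonempty fun a =>
        if xs a = 0 then x ℓ a else 0) Filter.atTop (nhds 0) ∧
    ∃ L : ℕ, ∀ ℓ ≥ L, ∀ a' a'',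
      (1 / 2) * ((Finset.univ.filter fun a =>
          0 < Finset.univ.sup' Finset.univ_nonempty (f xs) - f xs a).inf' hAplus
          fun a => Finset.univ.sup' Finset.univ_nonempty (f xs) - f xs a)
        < f (x ℓ) a'' - f (x ℓ) a' →
      x ℓ a' ≤ Finset.univ.sup' Finset.univ_nonempty fun a =>
        if xs a = 0 then x ℓ a else 0 := by
  classical
  set M := Finset.univ.sup' Finset.univ_nonempty (f xs) with hM
  set g0 := ((Finset.univ.filter fun a => 0 < M - f xs a).inf' hAplus
      fun a => M - f xs a) with hg0
  have hg0pos : 0 < g0 := by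
    rw [hg0, Finset.lt_inf'_iff]
    intro a ha
    exact (Finset.mem_filter.mp ha).2
  have hγpos : 0 < (1 / 2 : ℝ) * g0 := by positivity
  refine ⟨hγpos, ?_, ?_⟩
  · -- ε_ℓ → 0
    have h0 : Finset.univ.sup' Finset.univ_nonempty
        (fun a : A => if xs a = 0 then xs a else 0) = (0 : ℝ) := by
      rw [Finset.sup'_eq_of_forall]
      intro a _
      split <;> simp_all
    have key := Filter.Tendsto.finset_sup'_nhds_apply (l := Filter.atTop)
      (f := fun (a : A) (ℓ : ℕ) => if xs a = 0 then x ℓ a else 0)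
      (g := fun a : A => if xs a = 0 then xs a else 0)
      Finset.univ_nonempty (fun a _ => ?_)
    · rwa [h0] at key
    · by_cases h : xs a = 0 <;> simp only [h, if_true, if_false]
      · simpa [h, Function.comp_def] using (continuous_apply a).continuousAt.tendsto.comp hconv
      · exact tendsto_const_nhds
  · -- main part
    have hxsmem : xs ∈ {x : A → ℝ | (∀ a, 0 ≤ x a) ∧ ∑ a, x a = 1} := hxs
    have hxin : ∀ ℓ, x ℓ ∈ {x : A → ℝ | (∀ a, 0 ≤ x a) ∧ ∑ a, x a = 1} := by
      intro ℓ
      exact ⟨fun a => ((hxmem ℓ).1 a).le, (hxmem ℓ).2⟩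
    have htends : Filter.Tendsto (fun ℓ => f (x ℓ)) Filter.atTop (nhds (f xs)) := by
      apply (hf xs hxsmem).tendsto.comp
      rw [tendsto_nhdsWithin_iff]
      exact ⟨hconv, Filter.Eventually.of_forall hxin⟩
    have hcoord : ∀ a : A, Filter.Tendsto (fun ℓ => f (x ℓ) a) Filter.atTop
        (nhds (f xs a)) := fun a => (tendsto_pi_nhds.mp htends a)
    have hev : ∀ᶠ ℓ in Filter.atTop, ∀ a : A,
        |f (x ℓ) a - f xs a| < (1 / 4) * g0 := by
      apply Filter.eventually_all.2
      intro a
      have := (hcoord a).sub tendsto_const_nhds (g := fun _ => f xs a)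
      simp only [sub_self] at this
      have h2 := this.abs
      rw [abs_zero] at h2
      exact h2.eventually_lt_const (by positivity)
    rw [Filter.eventually_atTop] at hev
    obtain ⟨L, hL⟩ := hev
    refine ⟨L, fun ℓ hℓ a' a'' hgap => ?_⟩
    have h1 := hL ℓ hℓ a'
    have h2 := hL ℓ hℓ a''
    rw [abs_lt] at h1 h2
    have hzero : xs a' = 0 := by
      apply hsupp a' a''
      nlinarith [h1.1, h1.2, h2.1, h2.2]
    calc x ℓ a' = if xs a' = 0 then x ℓ a' else 0 := by rw [if_pos hzero]
      _ ≤ _ := Finset.le_sup' (fun a => if xs a = 0 then x ℓ a else 0) (Finset.mem_univ a')
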